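/- Suppose m = 2, u₁, u₂ is a basis of V over E orthogonal with respect to Φ, d₁ := Φ(u₁,u₁), d₂ := Φ(u₂,u₂), and σ₀ : E → ℝ is a ring embedding with σ₀(d₁) > 0 and σ₀(d₂) > 0. Let α be the E-linear endomorphism of V determined by α(u₁) = −d₁·u₂ and α(u₂) = d₂·u₁. Then: (1) α is not multiplication by any element of E, i.e. there is no a ∈ E with α(v) = a·v for all v ∈ V; (2) α∘α = multiplication by −d₁·d₂; and (3) for every f ∈ V ⊗_ℚ ℂ satisfying e•f = σ₀(e)·f for all e ∈ E and B_ℂ(f,f) = 0, the ℂ-linear extension of α to V ⊗_ℚ ℂ maps f into the line ℂ·f; in fact if f ≠ 0 it maps f to λ·f for some λ ∈ ℂ with λ² = −σ₀(d₁)·σ₀(d₂). -/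

import Mathlib

open scoped TensorProduct

/-- The action of `e : E` on `ℂ ⊗[ℚ] V` (the `E`-module structure
`e • (c ⊗ v) = c ⊗ (e • v)` on `V ⊗_ℚ ℂ`). -/
noncomputable def actC (E : Type*) {V : Type*} [Field E] [CharZero E]
    [AddCommGroup V] [Module E V] [Module ℚ V] [IsScalarTower ℚ E V] (e : E) :
    ℂ ⊗[ℚ] V →ₗ[ℂ] ℂ ⊗[ℚ] V :=
  LinearMap.baseChange ℂ ((LinearMap.lsmul E V e).restrictScalars ℚ)

section Stmt14Aux

variable {E V : Type*} [Field E] [NumberField E]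
  [AddCommGroup V] [Module E V] [Module ℚ V] [IsScalarTower ℚ E V]

/-- Auxiliary functional on `ℂ ⊗[ℚ] V`: `c ⊗ v ↦ c * τ (coordᵢ v)`. -/
noncomputable def phiA (u : Module.Basis (Fin 2) E V) (τ : E →ₐ[ℚ] ℂ) (i : Fin 2) :
    ℂ ⊗[ℚ] V →ₗ[ℂ] ℂ :=
  LinearMap.liftBaseChange ℂ (τ.toLinearMap ∘ₗ ((u.coord i).restrictScalars ℚ))

lemma phiA_tmul (u : Module.Basis (Fin 2) E V) (τ : E →ₐ[ℚ] ℂ) (i : Fin 2) (c : ℂ) (v : V) :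
    phiA u τ i (c ⊗ₜ[ℚ] v) = c * τ (u.coord i v) := by
  simp [phiA, LinearMap.liftBaseChange_tmul, smul_eq_mul]

lemma phiA_actC (u : Module.Basis (Fin 2) E V) (τ : E →ₐ[ℚ] ℂ) (i : Fin 2) (e : E)
    (x : ℂ ⊗[ℚ] V) : phiA u τ i (actC E e x) = τ e * phiA u τ i x := by
  induction x using TensorProduct.induction_on with
  | zero => simp
  | tmul c v =>
      simp only [actC, LinearMap.baseChange_tmul, LinearMap.coe_restrictScalars,
        LinearMap.lsmul_apply, phiA_tmul, map_smul, smul_eq_mul, map_mul]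
      ring
  | add x y hx hy => simp only [map_add, hx, hy, mul_add]

lemma injA (u : Module.Basis (Fin 2) E V) (f : ℂ ⊗[ℚ] V)
    (hf : ∀ (τ : E →ₐ[ℚ] ℂ) (i : Fin 2), phiA u τ i f = 0) : f = 0 := by
  classical
  haveI : FiniteDimensional E V := Module.Finite.of_basis u
  haveI : FiniteDimensional ℚ V := FiniteDimensional.trans ℚ E V
  have hli : LinearIndependent ℂ (fun p : (E →ₐ[ℚ] ℂ) × Fin 2 => phiA u p.1 p.2) := by
    rw [Fintype.linearIndependent_iff]
    intro a ha p
    obtain ⟨τ, j⟩ := p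
    have hchar : LinearIndependent ℂ
        (fun τ' : E →ₐ[ℚ] ℂ => ((τ' : E →* ℂ) : E → ℂ)) := by
      refine (linearIndependent_monoidHom E ℂ).comp _ ?_
      intro τ₁ τ₂ h
      ext x
      exact DFunLike.congr_fun h x
    have key : ∀ e : E, ∑ τ' : E →ₐ[ℚ] ℂ, a (τ', j) * τ' e = 0 := by
      intro e
      have h1 := congrArg
        (fun ψ : (ℂ ⊗[ℚ] V) →ₗ[ℂ] ℂ => ψ ((1 : ℂ) ⊗ₜ[ℚ] (e • u j))) ha
      simp only [LinearMap.coe_sum, Finset.sum_apply, LinearMap.smul_apply, smul_eq_mul,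
        LinearMap.zero_apply] at h1
      rw [Fintype.sum_prod_type] at h1
      have h2 : ∀ (τ' : E →ₐ[ℚ] ℂ) (i : Fin 2),
          phiA u τ' i ((1 : ℂ) ⊗ₜ[ℚ] (e • u j)) = if j = i then τ' e else 0 := by
        intro τ' i
        rw [phiA_tmul, one_mul, map_smul, smul_eq_mul, Module.Basis.coord_apply, Module.Basis.repr_self,
          Finsupp.single_apply]
        split <;> simp
      calc ∑ τ' : E →ₐ[ℚ] ℂ, a (τ', j) * τ' e
          = ∑ τ' : E →ₐ[ℚ] ℂ, ∑ i : Fin 2,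
              a (τ', i) * phiA u τ' i ((1 : ℂ) ⊗ₜ[ℚ] (e • u j)) := by
            refine Finset.sum_congr rfl fun τ' _ => ?_
            rw [Fin.sum_univ_two, h2 τ' 0, h2 τ' 1]
            fin_cases j <;> simp
        _ = 0 := h1
    have := Fintype.linearIndependent_iff.1 hchar (fun τ' => a (τ', j)) ?_ τ
    · exact this
    · funext e
      simpa [Finset.sum_apply] using key e
  have hsp : Submodule.span ℂ
      (Set.range fun p : (E →ₐ[ℚ] ℂ) × Fin 2 => phiA u p.1 p.2) = ⊤ := by
    apply Submodule.eq_top_of_finrank_eq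
    rw [finrank_span_eq_card hli, Subspace.dual_finrank_eq, Module.finrank_baseChange,
      Fintype.card_prod, AlgHom.card, Fintype.card_fin,
      ← Module.finrank_mul_finrank ℚ E V, Module.finrank_eq_card_basis u, Fintype.card_fin]
  rw [← Module.forall_dual_apply_eq_zero_iff ℂ f]
  intro ψ
  have hψ : ψ ∈ Submodule.span ℂ
      (Set.range fun p : (E →ₐ[ℚ] ℂ) × Fin 2 => phiA u p.1 p.2) :=
    hsp ▸ Submodule.mem_top
  induction hψ using Submodule.span_induction with
  | mem ψ hψ => obtain ⟨p, rfl⟩ := hψ; exact hf p.1 p.2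
  | zero => simp
  | add ψ₁ ψ₂ _ _ h₁ h₂ => simp [h₁, h₂]
  | smul c ψ _ h => simp [h]

end Stmt14Aux

/-- `E` totally real, `m = 2`, `u₁, u₂` a `Φ`-orthogonal `E`-basis of
`V`, `d₁ = Φ(u₁,u₁)`, `d₂ = Φ(u₂,u₂)`, `σ₀ : E → ℝ` with `σ₀(d₁) > 0`, `σ₀(d₂) > 0`,
and `α` the `E`-linear endomorphism with `α(u₁) = −d₁·u₂`, `α(u₂) = d₂·u₁`.  Then:
(1) `α` is not multiplication by any element of `E`; (2) `α∘α` is multiplication by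
`−d₁·d₂`; (3) every `f ∈ V ⊗_ℚ ℂ` with `e•f = σ₀(e)·f` for all `e ∈ E` and
`B(f,f) = 0` is mapped by the `ℂ`-linear extension of `α` into the line `ℂ·f`; in
fact if `f ≠ 0` it is mapped to `λ·f` with `λ² = −σ₀(d₁)·σ₀(d₂)`. -/
theorem stmt14 (E V : Type*) [Field E] [NumberField E]
    (htotreal : ∀ (σ : E →+* ℂ) (x : E), (σ x).im = 0)
    [AddCommGroup V] [Module E V] [Module ℚ V] [IsScalarTower ℚ E V]
    (Φ : V → V → E)
    (hΦadd1 : ∀ x x' y, Φ (x + x') y = Φ x y + Φ x' y)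
    (hΦsmul1 : ∀ (e : E) (x y : V), Φ (e • x) y = e * Φ x y)
    (hΦsymm : ∀ x y, Φ x y = Φ y x)
    (hΦnondeg : ∀ x, (∀ y, Φ x y = 0) → x = 0)
    (u : Module.Basis (Fin 2) E V)
    (horth : Φ (u 0) (u 1) = 0)
    (d₁ d₂ : E) (hd₁ : d₁ = Φ (u 0) (u 0)) (hd₂ : d₂ = Φ (u 1) (u 1))
    (σ₀ : E →+* ℝ) (hσ₀1 : 0 < σ₀ d₁) (hσ₀2 : 0 < σ₀ d₂)
    (α : V →ₗ[E] V) (hα1 : α (u 0) = (-d₁) • u 1) (hα2 : α (u 1) = d₂ • u 0)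
    (B : (ℂ ⊗[ℚ] V) →ₗ[ℂ] (ℂ ⊗[ℚ] V) →ₗ[ℂ] ℂ)
    (hB : ∀ (c c' : ℂ) (x y : V),
      B (c ⊗ₜ[ℚ] x) (c' ⊗ₜ[ℚ] y) = c * c' * ((Algebra.trace ℚ E (Φ x y) : ℚ) : ℂ)) :
    (¬ ∃ a : E, ∀ v : V, α v = a • v) ∧
    (∀ v : V, α (α v) = (-(d₁ * d₂)) • v) ∧
    (∀ f : ℂ ⊗[ℚ] V,
      (∀ e : E, actC E e f = ((σ₀ e : ℝ) : ℂ) • f) → B f f = 0 →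
      (∃ lam : ℂ, LinearMap.baseChange ℂ (α.restrictScalars ℚ) f = lam • f) ∧
      (f ≠ 0 → ∃ lam : ℂ,
        LinearMap.baseChange ℂ (α.restrictScalars ℚ) f = lam • f ∧
        lam ^ 2 = -(((σ₀ d₁ : ℝ) : ℂ) * ((σ₀ d₂ : ℝ) : ℂ)))) := by
  classical
  have hd₁0 : d₁ ≠ 0 := by
    intro h; rw [h, map_zero] at hσ₀1; exact lt_irrefl _ hσ₀1
  have hd₂0 : d₂ ≠ 0 := by
    intro h; rw [h, map_zero] at hσ₀2; exact lt_irrefl _ hσ₀2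
  -- Part 2
  have hαα : ∀ v : V, α (α v) = (-(d₁ * d₂)) • v := by
    have h : α ∘ₗ α = (-(d₁ * d₂)) • LinearMap.id := by
      apply u.ext
      intro i
      fin_cases i <;>
        simp [hα1, hα2, smul_smul, neg_mul, mul_comm]
    intro v
    have := LinearMap.congr_fun h v
    simpa using this
  refine ⟨?_, hαα, ?_⟩
  -- Part 1
  · rintro ⟨a, ha⟩
    have h0 : (-d₁) • u 1 = a • u 0 := by rw [← hα1, ha (u 0)]
    have h1 := congrArg (fun v => u.repr v 1) h0
    simp [Finsupp.single_apply] at h1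
    exact hd₁0 h1
  -- Part 3
  · set σa : E →ₐ[ℚ] ℂ := (Complex.ofRealHom.comp (σ₀ : E →+* ℝ)).toRatAlgHom with hσadef
    have hσae : ∀ e : E, σa e = ((σ₀ e : ℝ) : ℂ) := fun e => rfl
    have hσd1ne : σa d₁ ≠ 0 := by
      rw [hσae, Complex.ofReal_ne_zero]; exact ne_of_gt hσ₀1
    have hσd2ne : σa d₂ ≠ 0 := by
      rw [hσae, Complex.ofReal_ne_zero]; exact ne_of_gt hσ₀2
    set αC : ℂ ⊗[ℚ] V →ₗ[ℂ] ℂ ⊗[ℚ] V := LinearMap.baseChange ℂ (α.restrictScalars ℚ)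
      with hαCdef
    -- coordinates
    have hcoord : ∀ v : V, v = u.coord 0 v • u 0 + u.coord 1 v • u 1 := by
      intro v
      have h := Module.Basis.sum_repr u v
      rw [Fin.sum_univ_two] at h
      simp only [Module.Basis.coord_apply]
      exact h.symm
    have hΦadd2 : ∀ x y y' : V, Φ x (y + y') = Φ x y + Φ x y' := by
      intro x y y'; rw [hΦsymm, hΦadd1, hΦsymm y x, hΦsymm y' x]
    have hΦsmul2 : ∀ (e : E) (x y : V), Φ x (e • y) = e * Φ x y := by
      intro e x y; rw [hΦsymm, hΦsmul1, hΦsymm y x]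
    have h10 : Φ (u 1) (u 0) = 0 := by rw [hΦsymm]; exact horth
    have hΦexp : ∀ v w : V,
        Φ v w = u.coord 0 v * u.coord 0 w * d₁ + u.coord 1 v * u.coord 1 w * d₂ := by
      intro v w
      conv_lhs => rw [hcoord v, hcoord w]
      simp only [hΦadd1, hΦadd2, hΦsmul1, hΦsmul2, horth, h10, mul_zero, add_zero, zero_add]
      rw [hd₁, hd₂]; ring
    -- B as a sum over embeddings
    have hBsum : ∀ x y : ℂ ⊗[ℚ] V, B x y =
        ∑ τ : E →ₐ[ℚ] ℂ, (τ d₁ * (phiA u τ 0 x * phiA u τ 0 y)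
          + τ d₂ * (phiA u τ 1 x * phiA u τ 1 y)) := by
      intro x y
      induction x using TensorProduct.induction_on with
      | zero => simp
      | add x₁ x₂ h₁ h₂ =>
          simp only [map_add, LinearMap.add_apply, h₁, h₂, ← Finset.sum_add_distrib]
          exact Finset.sum_congr rfl fun τ _ => by ring
      | tmul c v =>
        induction y using TensorProduct.induction_on with
        | zero => simp
        | add y₁ y₂ h₁ h₂ =>
            simp only [map_add, h₁, h₂, ← Finset.sum_add_distrib]
            exact Finset.sum_congr rfl fun τ _ => by ring
        | tmul c' w =>
            rw [hB]
            have hcast : ((Algebra.trace ℚ E (Φ v w) : ℚ) : ℂ)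
                = algebraMap ℚ ℂ (Algebra.trace ℚ E (Φ v w)) :=
              (eq_ratCast (algebraMap ℚ ℂ) _).symm
            rw [hcast, trace_eq_sum_embeddings, Finset.mul_sum]
            refine Finset.sum_congr rfl fun τ _ => ?_
            rw [hΦexp v w, map_add, map_mul, map_mul, map_mul, map_mul,
              phiA_tmul, phiA_tmul, phiA_tmul, phiA_tmul]
            ring
    -- vanishing of non-σ₀ components of eigenvectors
    have hvan : ∀ (f : ℂ ⊗[ℚ] V), (∀ e : E, actC E e f = ((σ₀ e : ℝ) : ℂ) • f) →
        ∀ (τ : E →ₐ[ℚ] ℂ), τ ≠ σa → ∀ i, phiA u τ i f = 0 := by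
      intro f hf τ hτ i
      obtain ⟨e, he⟩ : ∃ e, τ e ≠ σa e := by
        by_contra h
        push_neg at h
        exact hτ (AlgHom.ext h)
      have h1 := congrArg (phiA u τ i) (hf e)
      rw [phiA_actC, map_smul, smul_eq_mul, ← hσae e] at h1
      have h2 : (τ e - σa e) * phiA u τ i f = 0 := by
        rw [sub_mul, h1, sub_self]
      exact (mul_eq_zero.1 h2).resolve_left (sub_ne_zero.2 he)
    -- coordinates of α
    have hc0 : ∀ v : V, u.coord 0 (α v) = d₂ * u.coord 1 v := by
      intro v
      have hv : α v = u.coord 0 v • ((-d₁) • u 1) + u.coord 1 v • (d₂ • u 0) := by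
        conv_lhs => rw [hcoord v]
        rw [map_add, map_smul, map_smul, hα1, hα2]
      rw [hv, map_add, map_smul, map_smul, map_smul, map_smul]
      simp [Module.Basis.coord_apply, Finsupp.single_apply, smul_eq_mul]
      ring
    have hc1 : ∀ v : V, u.coord 1 (α v) = (-d₁) * u.coord 0 v := by
      intro v
      have hv : α v = u.coord 0 v • ((-d₁) • u 1) + u.coord 1 v • (d₂ • u 0) := by
        conv_lhs => rw [hcoord v]
        rw [map_add, map_smul, map_smul, hα1, hα2]
      rw [hv, map_add, map_smul, map_smul, map_smul, map_smul]
      simp [Module.Basis.coord_apply, Finsupp.single_apply, smul_eq_mul, mul_comm]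
    -- φ of αC
    have hphi0 : ∀ (τ : E →ₐ[ℚ] ℂ) (x : ℂ ⊗[ℚ] V),
        phiA u τ 0 (αC x) = τ d₂ * phiA u τ 1 x := by
      intro τ x
      induction x using TensorProduct.induction_on with
      | zero => simp
      | tmul c v =>
          rw [hαCdef, LinearMap.baseChange_tmul]
          simp only [LinearMap.coe_restrictScalars, phiA_tmul, hc0, map_mul]
          ring
      | add x y hx hy => simp only [map_add, hx, hy, mul_add]
    have hphi1 : ∀ (τ : E →ₐ[ℚ] ℂ) (x : ℂ ⊗[ℚ] V),
        phiA u τ 1 (αC x) = (-(τ d₁)) * phiA u τ 0 x := by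
      intro τ x
      induction x using TensorProduct.induction_on with
      | zero => simp
      | tmul c v =>
          rw [hαCdef, LinearMap.baseChange_tmul]
          simp only [LinearMap.coe_restrictScalars, phiA_tmul, hc1, map_mul, map_neg]
          ring
      | add x y hx hy => simp only [map_add, hx, hy, mul_add]
    -- α commutes with the E-action
    have hcomm : ∀ (e : E) (x : ℂ ⊗[ℚ] V), actC E e (αC x) = αC (actC E e x) := by
      intro e x
      induction x using TensorProduct.induction_on with
      | zero => simp
      | tmul c v =>
          rw [hαCdef]
          simp only [actC, LinearMap.baseChange_tmul, LinearMap.coe_restrictScalars,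
            LinearMap.lsmul_apply, map_smul]
      | add x y hx hy => simp only [map_add, hx, hy]
    -- main argument
    intro f hf hBf
    set z0 : ℂ := phiA u σa 0 f with hz0def
    set z1 : ℂ := phiA u σa 1 f with hz1def
    have hrel : σa d₁ * z0 ^ 2 + σa d₂ * z1 ^ 2 = 0 := by
      rw [hBsum f f, Finset.sum_eq_single σa] at hBf
      · rw [← hBf]; ring
      · intro τ _ hτ
        rw [hvan f hf τ hτ 0, hvan f hf τ hτ 1]; ring
      · intro h; exact absurd (Finset.mem_univ σa) h
    have hgeig : ∀ e : E, actC E e (αC f) = ((σ₀ e : ℝ) : ℂ) • (αC f) := by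
      intro e
      rw [hcomm, hf e, map_smul]
    have hline : ∃ lam : ℂ, αC f = lam • f := by
      by_cases hz0 : z0 = 0
      · have hz1 : z1 = 0 := by
          have h1 : σa d₂ * z1 ^ 2 = 0 := by
            rw [hz0] at hrel
            calc σa d₂ * z1 ^ 2 = σa d₁ * 0 ^ 2 + σa d₂ * z1 ^ 2 := by ring
              _ = 0 := hrel
          have h2 := (mul_eq_zero.1 h1).resolve_left hσd2ne
          exact pow_eq_zero_iff (n := 2) (by norm_num) |>.1 h2
        have hf0 : f = 0 := by
          apply injA u f
          intro τ i
          by_cases hτ : τ = σa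
          · subst hτ
            fin_cases i
            · exact hz0
            · exact hz1
          · exact hvan f hf τ hτ i
        exact ⟨0, by rw [hf0]; simp⟩
      · refine ⟨σa d₂ * z1 / z0, ?_⟩
        have hh : αC f - (σa d₂ * z1 / z0) • f = 0 := by
          apply injA u
          intro τ i
          rw [map_sub, map_smul, smul_eq_mul]
          by_cases hτ : τ = σa
          · subst hτ
            have e0 : phiA u σa 0 (αC f) - σa d₂ * z1 / z0 * phiA u σa 0 f = 0 := by
              rw [hphi0, ← hz1def, ← hz0def]
              field_simp
              ring
            have e1 : phiA u σa 1 (αC f) - σa d₂ * z1 / z0 * phiA u σa 1 f = 0 := by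
              rw [hphi1, ← hz1def, ← hz0def]
              field_simp
              linear_combination -hrel
            fin_cases i
            · exact e0
            · exact e1
          · rw [hvan (αC f) hgeig τ hτ i, hvan f hf τ hτ i]
            ring
        have := sub_eq_zero.1 hh
        exact this
    have hsq : ∀ lam : ℂ, αC f = lam • f → f ≠ 0 →
        lam ^ 2 = -(((σ₀ d₁ : ℝ) : ℂ) * ((σ₀ d₂ : ℝ) : ℂ)) := by
      intro lam hlam hf0
      have h2 : αC (αC f) = (lam ^ 2) • f := by
        rw [hlam, map_smul, hlam, smul_smul, sq]
      have hcompeq : αC (αC f) = actC E (-(d₁ * d₂)) f := by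
        have heq : ((α.restrictScalars ℚ) ∘ₗ (α.restrictScalars ℚ))
            = (LinearMap.lsmul E V (-(d₁ * d₂))).restrictScalars ℚ := by
          ext v
          simpa using hαα v
        have : αC (αC f)
            = LinearMap.baseChange ℂ ((α.restrictScalars ℚ) ∘ₗ (α.restrictScalars ℚ)) f := by
          rw [LinearMap.baseChange_comp]
          rfl
        rw [this, heq]
        rfl
      have h3 : αC (αC f) = ((σ₀ (-(d₁ * d₂)) : ℝ) : ℂ) • f := by
        rw [hcompeq, hf (-(d₁ * d₂))]
      rw [h2] at h3
      have h4 : (lam ^ 2 - ((σ₀ (-(d₁ * d₂)) : ℝ) : ℂ)) • f = 0 := by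
        rw [sub_smul, h3, sub_self]
      have h5 := (smul_eq_zero.1 h4).resolve_right hf0
      have h6 : lam ^ 2 = ((σ₀ (-(d₁ * d₂)) : ℝ) : ℂ) := sub_eq_zero.1 h5
      rw [h6, map_neg, map_mul, Complex.ofReal_neg, Complex.ofReal_mul]
    obtain ⟨lam, hlam⟩ := hline
    exact ⟨⟨lam, hlam⟩, fun hf0 => ⟨lam, hlam, hsq lam hlam hf0⟩⟩
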